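/- Let q ∈ ℂ be not a root of unity (q^m ≠ 1 for every positive integer m). Let n ≥ 1 and let C₁₁, C₁₂, C₂₁, C₂₂ be n×n complex matrices satisfying the Dipper–Donkin quantum GL₂ relations, with the quantum determinant C₁₁C₂₂ − C₁₂C₂₁ invertible. Then C₁₁ and C₂₂ are invertible matrices, while C₁₂ and C₂₁ are nilpotent matrices. -/

import Mathlib

open Polynomial Matrix

/-- Evaluating the characteristic polynomial of a matrix at a scalar gives the
determinant of `μ • 1 - B`. -/
lemma dd_charpoly_eval {n : ℕ} (B : Matrix (Fin n) (Fin n) ℂ) (μ : ℂ) :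
    B.charpoly.eval μ = (μ • (1 : Matrix (Fin n) (Fin n) ℂ) - B).det := by
  rw [Matrix.charpoly, _root_.eval_det, Matrix.matPolyEquiv_charmatrix]
  congr 1
  simp [Polynomial.eval_sub, Matrix.scalar, smul_eq_diagonal_mul]

/-- If `d` is invertible, `q` is not a root of unity, and `d * B = q • (B * d)`,
then `B` is nilpotent. -/
lemma dd_nilp {n : ℕ} (q : ℂ) (hq : ∀ m : ℕ, 0 < m → q ^ m ≠ 1)
    (B d : Matrix (Fin n) (Fin n) ℂ) (hd : IsUnit d)
    (h : d * B = q • (B * d)) : IsNilpotent B := by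
  by_cases hq0 : q = 0
  · obtain ⟨u, rfl⟩ := hd
    rw [hq0, zero_smul] at h
    have hB : B = 0 := by
      calc B = ↑u⁻¹ * (↑u * B) := by rw [← mul_assoc, Units.inv_mul, one_mul]
      _ = 0 := by rw [h, mul_zero]
    exact hB ▸ ⟨1, by simp⟩
  have hqi : q⁻¹ ≠ 0 := inv_ne_zero hq0
  have hdet : d.det ≠ 0 := by
    have := (Matrix.isUnit_iff_isUnit_det d).mp hd
    simpa [isUnit_iff_ne_zero] using this
  have step : ∀ μ : ℂ, (μ • (1 : Matrix (Fin n) (Fin n) ℂ) - B).det = 0 →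
      ((q⁻¹ * μ) • (1 : Matrix (Fin n) (Fin n) ℂ) - B).det = 0 := by
    intro μ hμ
    have key : d * (μ • (1 : Matrix (Fin n) (Fin n) ℂ) - B)
        = q • (((q⁻¹ * μ) • (1 : Matrix (Fin n) (Fin n) ℂ) - B) * d) := by
      rw [mul_sub, mul_smul_comm, mul_one, sub_mul, smul_sub, smul_mul_assoc, one_mul,
        smul_smul, ← mul_assoc, mul_inv_cancel₀ hq0, one_mul, h]
    have := congrArg Matrix.det key
    rw [det_mul, det_smul, det_mul, hμ, mul_zero] at this
    rcases mul_eq_zero.mp this.symm with h' | h'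
    · exact absurd h' (pow_ne_zero _ hq0)
    · rcases mul_eq_zero.mp h' with h'' | h''
      · exact h''
      · exact absurd h'' hdet
  have hcp0 : ∀ μ : ℂ, B.charpoly.IsRoot μ → μ = 0 := by
    by_contra hcon
    push_neg at hcon
    obtain ⟨μ, hroot, hμ0⟩ := hcon
    have hall : ∀ k : ℕ, B.charpoly.IsRoot (q⁻¹ ^ k * μ) := by
      intro k
      induction k with
      | zero => simpa using hroot
      | succ k ih =>
        have := step _ (by rw [← dd_charpoly_eval]; exact ih)
        rw [Polynomial.IsRoot, dd_charpoly_eval]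
        convert this using 3
        ring
    have hkey : ∀ a b : ℕ, a < b → q⁻¹ ^ a = q⁻¹ ^ b → False := by
      intro a b hab hs
      have h1 : q⁻¹ ^ a * q⁻¹ ^ (b - a) = q⁻¹ ^ a * 1 := by
        rw [mul_one, ← pow_add, Nat.add_sub_cancel' hab.le, hs]
      have h2 := mul_left_cancel₀ (pow_ne_zero a hqi) h1
      rw [inv_pow, inv_eq_one] at h2
      exact hq _ (by omega) h2
    have hinj : Function.Injective (fun k : ℕ => q⁻¹ ^ k * μ) := by
      intro j k hjk
      simp only [mul_eq_mul_right_iff] at hjk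
      rcases hjk with hjk | hjk
      · by_contra hne
        rcases Nat.lt_or_ge j k with hlt | hge
        · exact hkey j k hlt hjk
        · exact hkey k j (by omega) hjk.symm
      · exact absurd hjk hμ0
    have hfin := Polynomial.finite_setOf_isRoot (Matrix.charpoly_monic B).ne_zero
    exact (Set.infinite_of_injective_forall_mem hinj hall) hfin
  have hsplit : B.charpoly.Splits := IsAlgClosed.splits B.charpoly
  have hcard : B.charpoly.roots.card = n := by
    rw [(Polynomial.splits_iff_card_roots).mp hsplit, Matrix.charpoly_natDegree_eq_dim,
      Fintype.card_fin]
  have hroots0 : B.charpoly.roots = Multiset.replicate n 0 :=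
    Multiset.eq_replicate.mpr ⟨hcard, fun μ hμ =>
      hcp0 μ (Polynomial.isRoot_of_mem_roots hμ)⟩
  have hX : B.charpoly = X ^ n := by
    conv_lhs => rw [hsplit.eq_prod_roots_of_monic
      (Matrix.charpoly_monic B)]
    rw [hroots0, Multiset.map_replicate, Multiset.prod_replicate]
    simp
  refine ⟨n, ?_⟩
  have := Matrix.aeval_self_charpoly B
  rwa [hX, map_pow, aeval_X] at this

/-- For any finite-dimensional representation of the Dipper–Donkin quantum `GL₂`
with `q` not a root of unity, the diagonal generators act invertibly and the
off-diagonal generators act nilpotently. -/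
theorem dipper_donkin_diag_invertible_offdiag_nilpotent
    (q : ℂ) (hq : ∀ m : ℕ, 0 < m → q ^ m ≠ 1)
    (n : ℕ) (hn : 1 ≤ n)
    (C11 C12 C21 C22 : Matrix (Fin n) (Fin n) ℂ)
    (h1 : C11 * C12 = C12 * C11)
    (h2 : C21 * C11 = q • (C11 * C21))
    (h3 : C22 * C12 = q • (C12 * C22))
    (h4 : C21 * C22 = C22 * C21)
    (h5 : C21 * C12 = q • (C12 * C21))
    (h6 : C22 * C11 - C11 * C22 = (q - 1) • (C12 * C21))
    (hdet : IsUnit (C11 * C22 - C12 * C21)) :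
    IsUnit C11 ∧ IsUnit C22 ∧ IsNilpotent C12 ∧ IsNilpotent C21 := by
  set d := C11 * C22 - C12 * C21 with hd_def
  -- the quantum determinant `d` q-commutes with the off-diagonal generators
  have hdB : d * C12 = q • (C12 * d) := by
    have e1 : C11 * C22 * C12 = q • (C12 * (C11 * C22)) := by
      calc C11 * C22 * C12 = C11 * (C22 * C12) := by rw [mul_assoc]
      _ = C11 * (q • (C12 * C22)) := by rw [h3]
      _ = q • (C11 * C12 * C22) := by rw [mul_smul_comm, mul_assoc]
      _ = q • (C12 * (C11 * C22)) := by rw [h1, mul_assoc]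
    have e2 : C12 * C21 * C12 = q • (C12 * (C12 * C21)) := by
      rw [mul_assoc, h5, mul_smul_comm]
    rw [hd_def, sub_mul, e1, e2, ← smul_sub, mul_sub]
  have hCd : C21 * d = q • (d * C21) := by
    have e1 : C21 * (C11 * C22) = q • (C11 * C22 * C21) := by
      calc C21 * (C11 * C22) = C21 * C11 * C22 := by rw [mul_assoc]
      _ = q • (C11 * C21 * C22) := by rw [h2, smul_mul_assoc]
      _ = q • (C11 * (C21 * C22)) := by rw [mul_assoc]
      _ = q • (C11 * C22 * C21) := by rw [h4, mul_assoc]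
    have e2 : C21 * (C12 * C21) = q • (C12 * C21 * C21) := by
      rw [← mul_assoc, h5, smul_mul_assoc]
    rw [hd_def, mul_sub, sub_mul, e1, e2, ← smul_sub]
  -- nilpotency of the off-diagonal generators
  have hB : IsNilpotent C12 := dd_nilp q hq C12 d hdet hdB
  have hC : IsNilpotent C21 := by
    have hdT : IsUnit dᵀ := by
      rw [Matrix.isUnit_iff_isUnit_det, Matrix.det_transpose,
        ← Matrix.isUnit_iff_isUnit_det]
      exact hdet
    have hT : dᵀ * C21ᵀ = q • (C21ᵀ * dᵀ) := by
      rw [← Matrix.transpose_mul, hCd, Matrix.transpose_smul, Matrix.transpose_mul]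
    obtain ⟨k, hk⟩ := dd_nilp q hq C21ᵀ dᵀ hdT hT
    refine ⟨k, ?_⟩
    have := congrArg Matrix.transpose hk
    rwa [← Matrix.transpose_pow, Matrix.transpose_transpose, Matrix.transpose_zero] at this
  -- `C12 * C21` is nilpotent
  have hl1 : ∀ k : ℕ, C21 ^ k * C12 = q ^ k • (C12 * C21 ^ k) := by
    intro k
    induction k with
    | zero => simp
    | succ k ih =>
      calc C21 ^ (k + 1) * C12 = C21 ^ k * (C21 * C12) := by
            rw [pow_succ, mul_assoc]
      _ = q • (C21 ^ k * (C12 * C21)) := by rw [h5, mul_smul_comm]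
      _ = q • (C21 ^ k * C12 * C21) := by rw [mul_assoc]
      _ = q • ((q ^ k • (C12 * C21 ^ k)) * C21) := by rw [ih]
      _ = q ^ (k + 1) • (C12 * C21 ^ (k + 1)) := by
            rw [smul_mul_assoc, smul_smul, mul_assoc, ← pow_succ, ← pow_succ']
  have hBC : IsNilpotent (C12 * C21) := by
    obtain ⟨m, hm⟩ := hB
    have key : ∀ k : ℕ, ∃ c : ℂ, (C12 * C21) ^ k = c • (C12 ^ k * C21 ^ k) := by
      intro k
      induction k with
      | zero => exact ⟨1, by simp⟩
      | succ k ih =>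
        obtain ⟨c, hc⟩ := ih
        refine ⟨c * q ^ k, ?_⟩
        calc (C12 * C21) ^ (k + 1) = (C12 * C21) ^ k * (C12 * C21) := pow_succ _ _
        _ = (c • (C12 ^ k * C21 ^ k)) * (C12 * C21) := by rw [hc]
        _ = c • (C12 ^ k * (C21 ^ k * C12) * C21) := by
              rw [smul_mul_assoc]; simp only [mul_assoc]
        _ = c • (C12 ^ k * (q ^ k • (C12 * C21 ^ k)) * C21) := by rw [hl1]
        _ = (c * q ^ k) • (C12 ^ (k + 1) * C21 ^ (k + 1)) := by
              rw [mul_smul_comm, smul_mul_assoc, smul_smul]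
              congr 1
              rw [pow_succ, pow_succ]
              simp only [mul_assoc]
    obtain ⟨c, hc⟩ := key m
    exact ⟨m, by rw [hc, hm, zero_mul, smul_zero]⟩
  -- `C11 * C22 = d + C12 * C21` is a unit
  have hcomm : Commute (C12 * C21) d := by
    have e1 : d * (C12 * C21) = q • (C12 * (d * C21)) := by
      rw [← mul_assoc, hdB, smul_mul_assoc, mul_assoc]
    have e2 : (C12 * C21) * d = q • (C12 * (d * C21)) := by
      rw [mul_assoc, hCd, mul_smul_comm]
    rw [Commute, SemiconjBy, e1, e2]
  have hAD : IsUnit (C11 * C22) := by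
    have hsum : d + C12 * C21 = C11 * C22 := by rw [hd_def, sub_add_cancel]
    rw [← hsum]
    exact IsNilpotent.isUnit_add_left_of_commute hBC hdet hcomm
  rw [Matrix.isUnit_iff_isUnit_det, Matrix.det_mul] at hAD
  exact ⟨(Matrix.isUnit_iff_isUnit_det C11).mpr (isUnit_of_mul_isUnit_left hAD),
    (Matrix.isUnit_iff_isUnit_det C22).mpr (isUnit_of_mul_isUnit_right hAD), hB, hC⟩
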